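/- arXiv:2306.10842 — 4 statements merged into one kernel-verified Lean document; each statement's English description precedes it below -/
import Mathlib

section
/- Let K be a connected fractal square of order n with digit set D. Then the self-similar boundary of K is the union of the face intersections over adjacency directions: ∂K = ⋃_{α ∈ A_D} F_α, where F_α = K ∩ (K + α) and A_D = {α ∈ {−1,0,1}² \ {(0,0)} : D ∩ (D + α) ≠ ∅}. -/
open Set Pointwise

noncomputable section

/-- The canonical embedding of `ℤ × ℤ` into `ℝ × ℝ`. -/
def coeZ2 (d : ℤ × ℤ) : ℝ × ℝ := ((d.1 : ℝ), (d.2 : ℝ))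

/-- The contraction similarity `x ↦ (x + d) / n` of the plane. -/
def pieceMap (n : ℕ) (d : ℤ × ℤ) (x : ℝ × ℝ) : ℝ × ℝ := (n : ℝ)⁻¹ • (x + coeZ2 d)

/-- `K` is a fractal square of order `n` with digit set `D ⊆ {0,…,n-1}²`,
`1 < |D| < n²`: a nonempty compact set with `K = (K + D)/n`. -/
def IsFractalSquare (n : ℕ) (D : Set (ℤ × ℤ)) (K : Set (ℝ × ℝ)) : Prop :=
  2 ≤ n ∧ D ⊆ Set.Icc (0, 0) ((n : ℤ) - 1, (n : ℤ) - 1) ∧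
  1 < Nat.card D ∧ Nat.card D < n ^ 2 ∧
  K.Nonempty ∧ IsCompact K ∧
  K = ⋃ d ∈ D, pieceMap n d '' K

/-- A dendrite: a nonempty compact, connected, locally connected (planar) set
containing no subset homeomorphic to the circle. -/
def IsDendrite (K : Set (ℝ × ℝ)) : Prop :=
  K.Nonempty ∧ IsCompact K ∧ IsConnected K ∧ LocallyConnectedSpace K ∧
  ¬ ∃ S : Set (ℝ × ℝ), S ⊆ K ∧ Nonempty (S ≃ₜ Circle)

/-- `Dpow n D k` is the digit set `D^k = n^{k-1}·D + ⋯ + n·D + D` (with `D^0 = {0}`). -/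
def Dpow (n : ℕ) (D : Set (ℤ × ℤ)) : ℕ → Set (ℤ × ℤ)
  | 0 => {(0, 0)}
  | k + 1 => Set.image2 (fun a b => (n : ℤ) • a + b) (Dpow n D k) D

/-- The critical set: union of pairwise intersections of first-order pieces. -/
def criticalSet (n : ℕ) (D : Set (ℤ × ℤ)) (K : Set (ℝ × ℝ)) : Set (ℝ × ℝ) :=
  ⋃ d ∈ D, ⋃ d' ∈ D, ⋃ (_ : d ≠ d'), (pieceMap n d '' K) ∩ (pieceMap n d' '' K)

/-- The self-similar boundary `∂K = {x ∈ K : ∃ k ≥ 1, ∃ d ∈ D^k, (x + d)/n^k ∈ C}`. -/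
def ssBoundary (n : ℕ) (D : Set (ℤ × ℤ)) (K : Set (ℝ × ℝ)) : Set (ℝ × ℝ) :=
  {x ∈ K | ∃ k ≥ 1, ∃ d ∈ Dpow n D k, ((n : ℝ) ^ k)⁻¹ • (x + coeZ2 d) ∈ criticalSet n D K}

/-- `F_α = K ∩ (K + α)`. -/
def Fset (K : Set (ℝ × ℝ)) (α : ℤ × ℤ) : Set (ℝ × ℝ) := K ∩ ((· + coeZ2 α) '' K)

/-- `A_D = {α ∈ {-1,0,1}² \ {(0,0)} : D ∩ (D + α) ≠ ∅}`. -/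
def adjDirs (D : Set (ℤ × ℤ)) : Set (ℤ × ℤ) :=
  {α | α ∈ ({-1, 0, 1} ×ˢ {-1, 0, 1} : Set (ℤ × ℤ)) ∧ α ≠ (0, 0) ∧
    (D ∩ ((· + α) '' D)).Nonempty}

-- ## basic coordinate lemmas

@[simp] lemma coeZ2_fst (d : ℤ × ℤ) : (coeZ2 d).1 = (d.1 : ℝ) := rfl
@[simp] lemma coeZ2_snd (d : ℤ × ℤ) : (coeZ2 d).2 = (d.2 : ℝ) := rfl

@[simp] lemma pieceMap_fst (n : ℕ) (d : ℤ × ℤ) (x : ℝ × ℝ) :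
    (pieceMap n d x).1 = (n : ℝ)⁻¹ * (x.1 + (d.1 : ℝ)) := rfl
@[simp] lemma pieceMap_snd (n : ℕ) (d : ℤ × ℤ) (x : ℝ × ℝ) :
    (pieceMap n d x).2 = (n : ℝ)⁻¹ * (x.2 + (d.2 : ℝ)) := rfl

lemma continuous_pieceMap (n : ℕ) (d : ℤ × ℤ) : Continuous (pieceMap n d) := by
  unfold pieceMap
  fun_prop

lemma mem_Fset_iff {K : Set (ℝ × ℝ)} {α : ℤ × ℤ} {x : ℝ × ℝ} :
    x ∈ Fset K α ↔ x ∈ K ∧ x - coeZ2 α ∈ K := by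
  unfold Fset
  constructor
  · rintro ⟨hx, y, hy, rfl⟩
    exact ⟨hx, by simpa using hy⟩
  · rintro ⟨hx, hy⟩
    exact ⟨hx, x - coeZ2 α, hy, sub_add_cancel x (coeZ2 α)⟩

lemma mem_criticalSet_iff {n : ℕ} {D : Set (ℤ × ℤ)} {K : Set (ℝ × ℝ)} {z : ℝ × ℝ} :
    z ∈ criticalSet n D K ↔ ∃ d ∈ D, ∃ d' ∈ D, d ≠ d' ∧
      z ∈ pieceMap n d '' K ∧ z ∈ pieceMap n d' '' K := by
  unfold criticalSet
  constructor
  · intro h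
    simp only [Set.mem_iUnion, Set.mem_inter_iff] at h
    obtain ⟨d, hd, d', hd', hne, h1, h2⟩ := h
    exact ⟨d, hd, d', hd', hne, h1, h2⟩
  · rintro ⟨d, hd, d', hd', hne, h1, h2⟩
    simp only [Set.mem_iUnion, Set.mem_inter_iff]
    exact ⟨d, hd, d', hd', hne, h1, h2⟩

lemma mem_Dpow_one_iff {n : ℕ} {D : Set (ℤ × ℤ)} {d : ℤ × ℤ} :
    d ∈ Dpow n D 1 ↔ d ∈ D := by
  show d ∈ Set.image2 _ (Dpow n D 0) D ↔ _
  constructor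
  · rintro ⟨a, ha, b, hb, rfl⟩
    have : a = (0, 0) := ha
    subst this
    convert hb using 1; ext <;> simp
  · intro hd
    exact ⟨(0, 0), rfl, d, hd, by simp⟩

lemma mem_piece_iff {n : ℕ} (hn : (n : ℝ) ≠ 0) {d : ℤ × ℤ} {K : Set (ℝ × ℝ)} {z : ℝ × ℝ} :
    z ∈ pieceMap n d '' K ↔ (n : ℝ) • z - coeZ2 d ∈ K := by
  constructor
  · rintro ⟨y, hy, rfl⟩
    have : (n : ℝ) • pieceMap n d y = y + coeZ2 d := by
      unfold pieceMap; rw [smul_inv_smul₀ hn]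
    rw [this]
    simpa using hy
  · intro h
    refine ⟨(n : ℝ) • z - coeZ2 d, h, ?_⟩
    unfold pieceMap
    rw [sub_add_cancel, inv_smul_smul₀ hn]

-- ## accessors

lemma IsFractalSquare.hn {n : ℕ} {D : Set (ℤ × ℤ)} {K : Set (ℝ × ℝ)}
    (h : IsFractalSquare n D K) : 2 ≤ n := h.1
lemma IsFractalSquare.hD {n : ℕ} {D : Set (ℤ × ℤ)} {K : Set (ℝ × ℝ)}
    (h : IsFractalSquare n D K) : D ⊆ Set.Icc (0, 0) ((n : ℤ) - 1, (n : ℤ) - 1) := h.2.1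
lemma IsFractalSquare.hne {n : ℕ} {D : Set (ℤ × ℤ)} {K : Set (ℝ × ℝ)}
    (h : IsFractalSquare n D K) : K.Nonempty := h.2.2.2.2.1
lemma IsFractalSquare.hcomp {n : ℕ} {D : Set (ℤ × ℤ)} {K : Set (ℝ × ℝ)}
    (h : IsFractalSquare n D K) : IsCompact K := h.2.2.2.2.2.1
lemma IsFractalSquare.hself {n : ℕ} {D : Set (ℤ × ℤ)} {K : Set (ℝ × ℝ)}
    (h : IsFractalSquare n D K) : K = ⋃ d ∈ D, pieceMap n d '' K := h.2.2.2.2.2.2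

lemma IsFractalSquare.hnR {n : ℕ} {D : Set (ℤ × ℤ)} {K : Set (ℝ × ℝ)}
    (h : IsFractalSquare n D K) : (2 : ℝ) ≤ (n : ℝ) := by exact_mod_cast h.hn
lemma IsFractalSquare.hn0 {n : ℕ} {D : Set (ℤ × ℤ)} {K : Set (ℝ × ℝ)}
    (h : IsFractalSquare n D K) : (n : ℝ) ≠ 0 := by
  have := h.hnR; linarith

lemma IsFractalSquare.digit_bounds {n : ℕ} {D : Set (ℤ × ℤ)} {K : Set (ℝ × ℝ)}
    (h : IsFractalSquare n D K) {d : ℤ × ℤ} (hd : d ∈ D) :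
    0 ≤ d.1 ∧ d.1 ≤ (n : ℤ) - 1 ∧ 0 ≤ d.2 ∧ d.2 ≤ (n : ℤ) - 1 := by
  have h1 := h.hD hd
  rw [Set.mem_Icc] at h1
  obtain ⟨hlo, hhi⟩ := h1
  exact ⟨hlo.1, hhi.1, hlo.2, hhi.2⟩

lemma IsFractalSquare.mem_K_iff {n : ℕ} {D : Set (ℤ × ℤ)} {K : Set (ℝ × ℝ)}
    (h : IsFractalSquare n D K) {x : ℝ × ℝ} :
    x ∈ K ↔ ∃ d ∈ D, ∃ y ∈ K, pieceMap n d y = x := by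
  conv_lhs => rw [h.hself]
  simp only [Set.mem_iUnion, Set.mem_image]
  constructor
  · rintro ⟨d, hd, y, hy, hEq⟩; exact ⟨d, hd, y, hy, hEq⟩
  · rintro ⟨d, hd, y, hy, hEq⟩; exact ⟨d, hd, y, hy, hEq⟩

lemma IsFractalSquare.piece_subset {n : ℕ} {D : Set (ℤ × ℤ)} {K : Set (ℝ × ℝ)}
    (h : IsFractalSquare n D K) {d : ℤ × ℤ} (hd : d ∈ D) {x : ℝ × ℝ} (hx : x ∈ K) :
    pieceMap n d x ∈ K := h.mem_K_iff.2 ⟨d, hd, x, hx, rfl⟩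

-- ## K is contained in the unit square

lemma IsFractalSquare.K_bounds {n : ℕ} {D : Set (ℤ × ℤ)} {K : Set (ℝ × ℝ)}
    (h : IsFractalSquare n D K) : ∀ x ∈ K, 0 ≤ x.1 ∧ x.1 ≤ 1 ∧ 0 ≤ x.2 ∧ x.2 ≤ 1 := by
  have hnR := h.hnR
  have hn0 := h.hn0
  have hub1 : ∀ x ∈ K, x.1 ≤ 1 := by
    obtain ⟨z, hzK, hzmax⟩ := h.hcomp.exists_isMaxOn h.hne continuous_fst.continuousOn
    obtain ⟨d, hd, y, hyK, hEq⟩ := h.mem_K_iff.1 hzK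
    have hz1 : (n : ℝ) * z.1 = y.1 + (d.1 : ℝ) := by
      have := congrArg Prod.fst hEq
      simp only [pieceMap_fst] at this
      rw [← this]; field_simp
    have hy1 : y.1 ≤ z.1 := hzmax hyK
    have hdb : (d.1 : ℝ) ≤ (n : ℝ) - 1 := by
      have := (h.digit_bounds hd).2.1
      have : ((d.1 : ℝ)) ≤ ((n : ℤ) - 1 : ℤ) := by exact_mod_cast this
      push_cast at this; linarith
    have hz1le : z.1 ≤ 1 := by nlinarith
    intro x hx
    exact le_trans (hzmax hx) hz1le
  have hlb1 : ∀ x ∈ K, 0 ≤ x.1 := by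
    obtain ⟨z, hzK, hzmin⟩ := h.hcomp.exists_isMinOn h.hne continuous_fst.continuousOn
    obtain ⟨d, hd, y, hyK, hEq⟩ := h.mem_K_iff.1 hzK
    have hz1 : (n : ℝ) * z.1 = y.1 + (d.1 : ℝ) := by
      have := congrArg Prod.fst hEq
      simp only [pieceMap_fst] at this
      rw [← this]; field_simp
    have hy1 : z.1 ≤ y.1 := hzmin hyK
    have hdb : (0 : ℝ) ≤ (d.1 : ℝ) := by exact_mod_cast (h.digit_bounds hd).1
    have hz1le : 0 ≤ z.1 := by nlinarith
    intro x hx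
    exact le_trans hz1le (hzmin hx)
  have hub2 : ∀ x ∈ K, x.2 ≤ 1 := by
    obtain ⟨z, hzK, hzmax⟩ := h.hcomp.exists_isMaxOn h.hne continuous_snd.continuousOn
    obtain ⟨d, hd, y, hyK, hEq⟩ := h.mem_K_iff.1 hzK
    have hz1 : (n : ℝ) * z.2 = y.2 + (d.2 : ℝ) := by
      have := congrArg Prod.snd hEq
      simp only [pieceMap_snd] at this
      rw [← this]; field_simp
    have hy1 : y.2 ≤ z.2 := hzmax hyK
    have hdb : (d.2 : ℝ) ≤ (n : ℝ) - 1 := by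
      have := (h.digit_bounds hd).2.2.2
      have : ((d.2 : ℝ)) ≤ ((n : ℤ) - 1 : ℤ) := by exact_mod_cast this
      push_cast at this; linarith
    have hz1le : z.2 ≤ 1 := by nlinarith
    intro x hx
    exact le_trans (hzmax hx) hz1le
  have hlb2 : ∀ x ∈ K, 0 ≤ x.2 := by
    obtain ⟨z, hzK, hzmin⟩ := h.hcomp.exists_isMinOn h.hne continuous_snd.continuousOn
    obtain ⟨d, hd, y, hyK, hEq⟩ := h.mem_K_iff.1 hzK
    have hz1 : (n : ℝ) * z.2 = y.2 + (d.2 : ℝ) := by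
      have := congrArg Prod.snd hEq
      simp only [pieceMap_snd] at this
      rw [← this]; field_simp
    have hy1 : z.2 ≤ y.2 := hzmin hyK
    have hdb : (0 : ℝ) ≤ (d.2 : ℝ) := by exact_mod_cast (h.digit_bounds hd).2.2.1
    have hz1le : 0 ≤ z.2 := by nlinarith
    intro x hx
    exact le_trans hz1le (hzmin hx)
  exact fun x hx => ⟨hlb1 x hx, hub1 x hx, hlb2 x hx, hub2 x hx⟩

lemma IsFractalSquare.diff_small {n : ℕ} {D : Set (ℤ × ℤ)} {K : Set (ℝ × ℝ)}
    (h : IsFractalSquare n D K) {x y : ℝ × ℝ} {β : ℤ × ℤ}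
    (hx : x ∈ K) (hy : y ∈ K) (hd : x - y = coeZ2 β) :
    -1 ≤ β.1 ∧ β.1 ≤ 1 ∧ -1 ≤ β.2 ∧ β.2 ≤ 1 := by
  have hbx := h.K_bounds x hx
  have hby := h.K_bounds y hy
  have h1 : (β.1 : ℝ) = x.1 - y.1 := by
    have := congrArg Prod.fst hd; simpa using this.symm
  have h2 : (β.2 : ℝ) = x.2 - y.2 := by
    have := congrArg Prod.snd hd; simpa using this.symm
  constructor
  · exact_mod_cast (by rw [h1]; linarith [hbx.1, hbx.2.1, hby.1, hby.2.1] : (-1 : ℝ) ≤ (β.1 : ℝ))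
  constructor
  · exact_mod_cast (by rw [h1]; linarith [hbx.1, hbx.2.1, hby.1, hby.2.1] : ((β.1 : ℝ)) ≤ 1)
  constructor
  · exact_mod_cast (by rw [h2]; linarith [hbx.2.2.1, hbx.2.2.2, hby.2.2.1, hby.2.2.2] : (-1 : ℝ) ≤ (β.2 : ℝ))
  · exact_mod_cast (by rw [h2]; linarith [hbx.2.2.1, hbx.2.2.2, hby.2.2.1, hby.2.2.2] : ((β.2 : ℝ)) ≤ 1)

-- ## corners of the unit square force extreme digits

lemma IsFractalSquare.corner_digit {n : ℕ} {D : Set (ℤ × ℤ)} {K : Set (ℝ × ℝ)}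
    (h : IsFractalSquare n D K) {x : ℝ × ℝ} (hx : x ∈ K) (e : ℤ × ℤ)
    (h1 : (x.1 = 0 ∧ e.1 = 0) ∨ (x.1 = 1 ∧ e.1 = (n : ℤ) - 1))
    (h2 : (x.2 = 0 ∧ e.2 = 0) ∨ (x.2 = 1 ∧ e.2 = (n : ℤ) - 1)) : e ∈ D := by
  obtain ⟨d, hd, y, hyK, hEq⟩ := h.mem_K_iff.1 hx
  have hby := h.K_bounds y hyK
  have hdb := h.digit_bounds hd
  have hnR := h.hnR
  have hn0 := h.hn0
  have hc1 : (n : ℝ) * x.1 = y.1 + (d.1 : ℝ) := by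
    have := congrArg Prod.fst hEq
    simp only [pieceMap_fst] at this
    rw [← this]; field_simp
  have hc2 : (n : ℝ) * x.2 = y.2 + (d.2 : ℝ) := by
    have := congrArg Prod.snd hEq
    simp only [pieceMap_snd] at this
    rw [← this]; field_simp
  have hd1R : (0 : ℝ) ≤ (d.1 : ℝ) ∧ (d.1 : ℝ) ≤ (n : ℝ) - 1 := by
    constructor
    · exact_mod_cast hdb.1
    · have : ((d.1 : ℝ)) ≤ (((n : ℤ) - 1 : ℤ) : ℝ) := by exact_mod_cast hdb.2.1
      push_cast at this; linarith
  have hd2R : (0 : ℝ) ≤ (d.2 : ℝ) ∧ (d.2 : ℝ) ≤ (n : ℝ) - 1 := by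
    constructor
    · exact_mod_cast hdb.2.2.1
    · have : ((d.2 : ℝ)) ≤ (((n : ℤ) - 1 : ℤ) : ℝ) := by exact_mod_cast hdb.2.2.2
      push_cast at this; linarith
  have he1 : d.1 = e.1 := by
    rcases h1 with ⟨hx1, he1⟩ | ⟨hx1, he1⟩
    · rw [hx1] at hc1
      have : (d.1 : ℝ) = 0 := by linarith [hby.1]
      rw [he1]; exact_mod_cast this
    · rw [hx1] at hc1
      have : (d.1 : ℝ) = (n : ℝ) - 1 := by linarith [hby.2.1]
      rw [he1]
      have : ((d.1 : ℝ)) = (((n : ℤ) - 1 : ℤ) : ℝ) := by push_cast; linarith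
      exact_mod_cast this
  have he2 : d.2 = e.2 := by
    rcases h2 with ⟨hx2, he2⟩ | ⟨hx2, he2⟩
    · rw [hx2] at hc2
      have : (d.2 : ℝ) = 0 := by linarith [hby.2.2.1]
      rw [he2]; exact_mod_cast this
    · rw [hx2] at hc2
      have : (d.2 : ℝ) = (n : ℝ) - 1 := by linarith [hby.2.2.2]
      rw [he2]
      have : ((d.2 : ℝ)) = (((n : ℤ) - 1 : ℤ) : ℝ) := by push_cast; linarith
      exact_mod_cast this
  have : d = e := Prod.ext he1 he2
  rwa [← this]

-- ## integer intermediate value theorem along a chain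

lemma int_ivt (v : ℤ) : ∀ (M : ℕ) (g : ℕ → ℤ), (∀ i, i < M → g (i + 1) ≤ g i + 1) →
    g 0 < v → v ≤ g M → ∃ i, i ≤ M ∧ g i = v := by
  intro M
  induction M with
  | zero => intro g _ h0 hM; omega
  | succ M IH =>
    intro g hstep h0 hM
    by_cases hc : v ≤ g M
    · obtain ⟨i, hi, hgi⟩ := IH g (fun i hi => hstep i (by omega)) h0 hc
      exact ⟨i, by omega, hgi⟩
    · push_neg at hc
      have := hstep M (by omega)
      exact ⟨M + 1, le_refl _, by omega⟩

-- ## the key combinatorial lemma: a chain of small steps inside a set avoiding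
-- (1,1)-differences cannot increase both coordinates

lemma diag_jump (P : ℤ × ℤ → Prop) (R : ℤ × ℤ → ℤ × ℤ → Prop)
    (hRP : ∀ a b, R a b → P b)
    (hstep : ∀ a b, R a b → b.1 - a.1 ≤ 1 ∧ a.1 - b.1 ≤ 1 ∧ b.2 - a.2 ≤ 1 ∧ a.2 - b.2 ≤ 1)
    (havoid : ∀ a b, P a → P b → ¬(b.1 = a.1 + 1 ∧ b.2 = a.2 + 1)) :
    ∀ L : ℕ, ∀ f : ℕ → ℤ × ℤ, P (f 0) → (∀ i, i < L → R (f i) (f (i + 1))) →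
      ¬((f 0).1 + 1 ≤ (f L).1 ∧ (f 0).2 + 1 ≤ (f L).2) := by
  intro L
  induction L using Nat.strong_induction_on with
  | _ L IH =>
  intro f hP0 hchain hviol
  have hPall : ∀ i, i ≤ L → P (f i) := by
    intro i
    induction i with
    | zero => intro _; exact hP0
    | succ i IHi =>
      intro hi
      exact hRP _ _ (hchain i (by omega))
  rcases Nat.eq_zero_or_pos L with rfl | hL
  · omega
  -- notation
  have hcurstep : R (f (L - 1)) (f L) := by
    have := hchain (L - 1) (by omega)
    rwa [Nat.sub_add_cancel hL] at this
  obtain ⟨ht1, ht2, ht3, ht4⟩ := hstep _ _ hcurstep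
  have havsq : ¬((f L).1 = (f 0).1 + 1 ∧ (f L).2 = (f 0).2 + 1) :=
    havoid _ _ (hPall 0 (by omega)) (hPall L (le_refl _))
  have havcq : ¬((f L).1 = (f (L - 1)).1 + 1 ∧ (f L).2 = (f (L - 1)).2 + 1) :=
    havoid _ _ (hPall (L - 1) (by omega)) (hPall L (le_refl _))
  -- main dichotomy
  by_cases hd : (f 0).1 + 1 ≤ (f (L - 1)).1 ∧ (f 0).2 + 1 ≤ (f (L - 1)).2
  · exact IH (L - 1) (by omega) f hP0 (fun i hi => hchain i (by omega)) hd
  push_neg at hd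
  -- cur is coordinatewise ≥ s
  have hcs1 : (f 0).1 ≤ (f (L - 1)).1 := by omega
  have hcs2 : (f 0).2 ≤ (f (L - 1)).2 := by omega
  -- branch on which coordinate of cur is clamped
  by_cases hbr : (f (L - 1)).1 ≤ (f 0).1
  · -- Branch A : cur.1 = s.1 , q.1 = s.1 + 1 , q.2 ≥ s.2 + 2
    have hc1 : (f (L - 1)).1 = (f 0).1 := le_antisymm hbr hcs1
    have hq1 : (f L).1 = (f 0).1 + 1 := by omega
    have hq2 : (f 0).2 + 2 ≤ (f L).2 := by
      rcases Int.lt_or_le ((f 0).2 + 1) ((f L).2) with h' | h'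
      · omega
      · exfalso; exact havsq ⟨hq1, by omega⟩
    have hcur2 : (f L).2 - 1 ≤ (f (L - 1)).2 := by omega
    -- find w on the chain with second coordinate q.2 - 1
    obtain ⟨i, hiL, hwi⟩ := int_ivt ((f L).2 - 1) (L - 1) (fun j => (f j).2)
      (fun j hj => by
        have := (hstep _ _ (hchain j (by omega))).2.2.1
        show (f (j + 1)).2 ≤ (f j).2 + 1
        omega)
      (by show (f 0).2 < (f L).2 - 1; omega) hcur2
    -- w.1 ≤ s.1 by IH on the prefix
    have hw1le : (f i).1 ≤ (f 0).1 := by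
      by_contra hcon
      exact IH i (by omega) f hP0 (fun j hj => hchain j (by omega))
        ⟨by omega, by omega⟩
    -- cur.2 > w.2 (else havoid cur q)
    have hcur2' : (f i).2 + 1 ≤ (f (L - 1)).2 := by
      rcases Int.lt_or_le ((f i).2) ((f (L - 1)).2) with h' | h'
      · omega
      · exfalso; exact havcq ⟨by omega, by omega⟩
    -- w.1 ≥ s.1 = cur.1 by IH on the suffix chain from i to L-1
    have hw1ge : (f 0).1 ≤ (f i).1 := by
      by_contra hcon
      push_neg at hcon
      have hkey := IH (L - 1 - i) (by omega) (fun j => f (i + j))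
        (hPall i (by omega))
        (fun j hj => by
          have := hchain (i + j) (by omega)
          exact this)
        ?_
      · exact hkey
      · have hiL' : i + (L - 1 - i) = L - 1 := by omega
        constructor
        · show (f (i + 0)).1 + 1 ≤ (f (i + (L - 1 - i))).1
          rw [hiL', Nat.add_zero]; omega
        · show (f (i + 0)).2 + 1 ≤ (f (i + (L - 1 - i))).2
          rw [hiL', Nat.add_zero]; omega
    -- now w = q - (1,1) : contradiction with havoid
    exact havoid _ _ (hPall i (by omega)) (hPall L (le_refl _)) ⟨by omega, by omega⟩
  · -- Branch B : symmetric, cur.2 = s.2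
    push_neg at hbr
    have hc2 : (f (L - 1)).2 = (f 0).2 := by omega
    have hq2 : (f L).2 = (f 0).2 + 1 := by omega
    have hq1 : (f 0).1 + 2 ≤ (f L).1 := by
      rcases Int.lt_or_le ((f 0).1 + 1) ((f L).1) with h' | h'
      · omega
      · exfalso; exact havsq ⟨by omega, hq2⟩
    have hcur1 : (f L).1 - 1 ≤ (f (L - 1)).1 := by omega
    obtain ⟨i, hiL, hwi⟩ := int_ivt ((f L).1 - 1) (L - 1) (fun j => (f j).1)
      (fun j hj => by
        have := (hstep _ _ (hchain j (by omega))).1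
        show (f (j + 1)).1 ≤ (f j).1 + 1
        omega)
      (by show (f 0).1 < (f L).1 - 1; omega) hcur1
    have hw2le : (f i).2 ≤ (f 0).2 := by
      by_contra hcon
      exact IH i (by omega) f hP0 (fun j hj => hchain j (by omega))
        ⟨by omega, by omega⟩
    have hcur1' : (f i).1 + 1 ≤ (f (L - 1)).1 := by
      rcases Int.lt_or_le ((f i).1) ((f (L - 1)).1) with h' | h'
      · omega
      · exfalso; exact havcq ⟨by omega, by omega⟩
    have hw2ge : (f 0).2 ≤ (f i).2 := by
      by_contra hcon
      push_neg at hcon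
      have hkey := IH (L - 1 - i) (by omega) (fun j => f (i + j))
        (hPall i (by omega))
        (fun j hj => by
          have := hchain (i + j) (by omega)
          exact this)
        ?_
      · exact hkey
      · have hiL' : i + (L - 1 - i) = L - 1 := by omega
        constructor
        · show (f (i + 0)).1 + 1 ≤ (f (i + (L - 1 - i))).1
          rw [hiL', Nat.add_zero]; omega
        · show (f (i + 0)).2 + 1 ≤ (f (i + (L - 1 - i))).2
          rw [hiL', Nat.add_zero]; omega
    exact havoid _ _ (hPall i (by omega)) (hPall L (le_refl _)) ⟨by omega, by omega⟩

-- ## finiteness of the digit set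

lemma IsFractalSquare.Dfin {n : ℕ} {D : Set (ℤ × ℤ)} {K : Set (ℝ × ℝ)}
    (h : IsFractalSquare n D K) : D.Finite := by
  by_contra hinf
  have hinf' : D.Infinite := hinf
  have := hinf'.to_subtype
  have h0 : Nat.card D = 0 := Nat.card_eq_zero_of_infinite
  have := h.2.2.1
  omega

-- ## the contact relation between digits

def pieceRel (n : ℕ) (D : Set (ℤ × ℤ)) (K : Set (ℝ × ℝ)) (d d' : ℤ × ℤ) : Prop :=
  d ∈ D ∧ d' ∈ D ∧ ((pieceMap n d '' K) ∩ (pieceMap n d' '' K)).Nonempty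

lemma pieceRel_step {n : ℕ} {D : Set (ℤ × ℤ)} {K : Set (ℝ × ℝ)}
    (h : IsFractalSquare n D K) {d d' : ℤ × ℤ} (hr : pieceRel n D K d d') :
    d'.1 - d.1 ≤ 1 ∧ d.1 - d'.1 ≤ 1 ∧ d'.2 - d.2 ≤ 1 ∧ d.2 - d'.2 ≤ 1 := by
  obtain ⟨hd, hd', z, hz1, hz2⟩ := hr
  rw [mem_piece_iff h.hn0] at hz1 hz2
  have hdiff : ((n : ℝ) • z - coeZ2 d') - ((n : ℝ) • z - coeZ2 d) = coeZ2 (d - d') := by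
    apply Prod.ext <;> simp
  have := h.diff_small hz2 hz1 hdiff
  simp only [Prod.fst_sub, Prod.snd_sub] at this
  omega

-- ## Hata: connectivity of K implies connectivity of the piece graph

lemma pieceRel_connected {n : ℕ} {D : Set (ℤ × ℤ)} {K : Set (ℝ × ℝ)}
    (h : IsFractalSquare n D K) (hconn : IsConnected K) :
    ∀ d ∈ D, ∀ d' ∈ D, Relation.ReflTransGen (pieceRel n D K) d d' := by
  intro d hd d' hd'
  by_contra hnot
  set S : Set (ℤ × ℤ) := {e | e ∈ D ∧ Relation.ReflTransGen (pieceRel n D K) d e} with hS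
  have hSsub : S ⊆ D := fun e he => he.1
  have hd'S : d' ∈ D \ S := ⟨hd', fun hc => hnot hc.2⟩
  set K₁ : Set (ℝ × ℝ) := ⋃ e ∈ S, pieceMap n e '' K with hK₁
  set K₂ : Set (ℝ × ℝ) := ⋃ e ∈ D \ S, pieceMap n e '' K with hK₂
  have hsplit : K = K₁ ∪ K₂ := by
    conv_lhs => rw [h.hself]
    rw [hK₁, hK₂, ← Set.biUnion_union, Set.union_diff_cancel hSsub]
  have hdisj : ∀ z, z ∈ K₁ → z ∈ K₂ → False := by
    intro z hz1 hz2
    simp only [hK₁, hK₂, Set.mem_iUnion] at hz1 hz2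
    obtain ⟨e, heS, hze⟩ := hz1
    obtain ⟨e', he'S, hze'⟩ := hz2
    have hr : pieceRel n D K e e' := ⟨hSsub heS, he'S.1, z, hze, hze'⟩
    exact he'S.2 ⟨he'S.1, heS.2.tail hr⟩
  have hcpt : ∀ (T : Set (ℤ × ℤ)), T ⊆ D → IsCompact (⋃ e ∈ T, pieceMap n e '' K) := by
    intro T hT
    apply Set.Finite.isCompact_biUnion (h.Dfin.subset hT)
    intro e _
    exact h.hcomp.image (continuous_pieceMap n e)
  have hcl1 : IsClosed K₁ := (hcpt S hSsub).isClosed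
  have hcl2 : IsClosed K₂ := (hcpt _ Set.diff_subset).isClosed
  have hne1 : K₁.Nonempty := by
    obtain ⟨x, hx⟩ := h.hne
    exact ⟨pieceMap n d x, Set.mem_biUnion ⟨hd, Relation.ReflTransGen.refl⟩ ⟨x, hx, rfl⟩⟩
  have hne2 : K₂.Nonempty := by
    obtain ⟨x, hx⟩ := h.hne
    exact ⟨pieceMap n d' x, Set.mem_biUnion hd'S ⟨x, hx, rfl⟩⟩
  have hpre := hconn.isPreconnected
  have hres := hpre K₂ᶜ K₁ᶜ hcl2.isOpen_compl hcl1.isOpen_compl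
    (by
      intro z hz
      rw [hsplit] at hz
      rcases hz with hz | hz
      · exact Or.inl (fun hc => hdisj z hz hc)
      · exact Or.inr (fun hc => hdisj z hc hz))
    (by
      obtain ⟨z, hz⟩ := hne1
      exact ⟨z, by rw [hsplit]; exact Or.inl hz, fun hc => hdisj z hz hc⟩)
    (by
      obtain ⟨z, hz⟩ := hne2
      exact ⟨z, by rw [hsplit]; exact Or.inr hz, fun hc => hdisj z hc hz⟩)
  obtain ⟨z, hzK, hz2, hz1⟩ := hres
  rw [hsplit] at hzK
  rcases hzK with hz | hz
  · exact hz1 hz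
  · exact hz2 hz

-- ## turning a ReflTransGen into a finite chain

lemma exists_chain_fun {α : Type*} {R : α → α → Prop} {a b : α}
    (h : Relation.ReflTransGen R a b) :
    ∃ (L : ℕ) (f : ℕ → α), f 0 = a ∧ f L = b ∧ ∀ i, i < L → R (f i) (f (i + 1)) := by
  induction h with
  | refl => exact ⟨0, fun _ => a, rfl, rfl, fun i hi => absurd hi (Nat.not_lt_zero i)⟩
  | @tail b c hab hbc IH =>
    obtain ⟨L, f, hf0, hfL, hstep⟩ := IH
    refine ⟨L + 1, fun i => if i ≤ L then f i else c, by simpa using hf0, by simp, ?_⟩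
    intro i hi
    rcases Nat.lt_or_ge i L with hiL | hiL
    · have h1 : i ≤ L := by omega
      have h2 : i + 1 ≤ L := by omega
      simpa [h1, h2] using hstep i hiL
    · have : i = L := by omega
      subst this
      simp [hfL, hbc]

-- ## opposite corners in K force adjacent digit pairs (uses connectivity)

lemma IsFractalSquare.diag_pair {n : ℕ} {D : Set (ℤ × ℤ)} {K : Set (ℝ × ℝ)}
    (h : IsFractalSquare n D K) (hconn : IsConnected K)
    (h0 : ((0 : ℝ), (0 : ℝ)) ∈ K) (h1 : ((1 : ℝ), (1 : ℝ)) ∈ K) :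
    ∃ p ∈ D, p + (1, 1) ∈ D := by
  by_contra hno
  push_neg at hno
  have hd0 : ((0 : ℤ), (0 : ℤ)) ∈ D :=
    h.corner_digit h0 ((0 : ℤ), (0 : ℤ)) (Or.inl ⟨rfl, rfl⟩) (Or.inl ⟨rfl, rfl⟩)
  have hdN : ((n : ℤ) - 1, (n : ℤ) - 1) ∈ D :=
    h.corner_digit h1 ((n : ℤ) - 1, (n : ℤ) - 1) (Or.inr ⟨rfl, rfl⟩) (Or.inr ⟨rfl, rfl⟩)
  obtain ⟨L, f, hf0, hfL, hchain⟩ :=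
    exists_chain_fun (pieceRel_connected h hconn _ hd0 _ hdN)
  have hn := h.hn
  refine diag_jump (· ∈ D) (pieceRel n D K)
    (fun a b hr => hr.2.1)
    (fun a b hr => pieceRel_step h hr)
    (fun a b ha hb hc => hno a ha ?_)
    L f (by rw [hf0]; exact hd0) hchain ?_
  · have : b = a + (1, 1) := Prod.ext (by simp [hc.1]) (by simp [hc.2])
    rwa [← this]
  · rw [hf0, hfL]
    constructor <;> · simp; omega

lemma IsFractalSquare.antidiag_pair {n : ℕ} {D : Set (ℤ × ℤ)} {K : Set (ℝ × ℝ)}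
    (h : IsFractalSquare n D K) (hconn : IsConnected K)
    (h10 : ((1 : ℝ), (0 : ℝ)) ∈ K) (h01 : ((0 : ℝ), (1 : ℝ)) ∈ K) :
    ∃ p ∈ D, p + (1, -1) ∈ D := by
  by_contra hno
  push_neg at hno
  have hdA : ((0 : ℤ), (n : ℤ) - 1) ∈ D :=
    h.corner_digit h01 ((0 : ℤ), (n : ℤ) - 1) (Or.inl ⟨rfl, rfl⟩) (Or.inr ⟨rfl, rfl⟩)
  have hdB : ((n : ℤ) - 1, (0 : ℤ)) ∈ D :=
    h.corner_digit h10 ((n : ℤ) - 1, (0 : ℤ)) (Or.inr ⟨rfl, rfl⟩) (Or.inl ⟨rfl, rfl⟩)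
  obtain ⟨L, f, hf0, hfL, hchain⟩ :=
    exists_chain_fun (pieceRel_connected h hconn _ hdA _ hdB)
  have hn := h.hn
  refine diag_jump (fun a => (a.1, -a.2) ∈ D) (fun a b => pieceRel n D K (a.1, -a.2) (b.1, -b.2))
    (fun a b hr => hr.2.1)
    (fun a b hr => by
      have := pieceRel_step h hr
      simp only at this
      omega)
    (fun a b ha hb hc => hno (a.1, -a.2) ha ?_)
    L (fun i => ((f i).1, -(f i).2)) ?_ (fun i hi => by
      have := hchain i hi
      simpa using this) ?_
  · have : (b.1, -b.2) = (a.1, -a.2) + (1, -1) :=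
      Prod.ext (by simp [hc.1]) (by simp [hc.2]; omega)
    rwa [← this]
  · simp only [hf0]
    simpa using hdA
  · simp only [hf0, hfL]
    constructor <;> · simp; omega

-- ## adjDirs helpers

lemma mem_adjDirs_intro {D : Set (ℤ × ℤ)} {α : ℤ × ℤ}
    (h1 : -1 ≤ α.1) (h2 : α.1 ≤ 1) (h3 : -1 ≤ α.2) (h4 : α.2 ≤ 1)
    (hne : α ≠ (0, 0)) {q : ℤ × ℤ} (hq : q ∈ D) (hqα : q + α ∈ D) :
    α ∈ adjDirs D := by
  refine ⟨?_, hne, ⟨q + α, hqα, q, hq, rfl⟩⟩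
  rw [Set.mem_prod]
  simp only [Set.mem_insert_iff, Set.mem_singleton_iff]
  omega

lemma adjDirs_elim {D : Set (ℤ × ℤ)} {α : ℤ × ℤ} (h : α ∈ adjDirs D) :
    α ≠ (0, 0) ∧ ∃ q ∈ D, q + α ∈ D := by
  obtain ⟨_, hne, p, hpD, q, hqD, hqα⟩ := h
  exact ⟨hne, q, hqD, by simp only at hqα; rwa [hqα]⟩

lemma adjDirs_bounds {D : Set (ℤ × ℤ)} {α : ℤ × ℤ} (h : α ∈ adjDirs D) :
    -1 ≤ α.1 ∧ α.1 ≤ 1 ∧ -1 ≤ α.2 ∧ α.2 ≤ 1 := by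
  obtain ⟨hmem, -, -⟩ := h
  rw [Set.mem_prod] at hmem
  simp only [Set.mem_insert_iff, Set.mem_singleton_iff] at hmem
  omega

-- ## the main induction

lemma IsFractalSquare.boundary_step {n : ℕ} {D : Set (ℤ × ℤ)} {K : Set (ℝ × ℝ)}
    (h : IsFractalSquare n D K) (hconn : IsConnected K) :
    ∀ k : ℕ, ∀ x ∈ K, ∀ d ∈ Dpow n D (k + 1),
      ((n : ℝ) ^ (k + 1))⁻¹ • (x + coeZ2 d) ∈ criticalSet n D K →
      ∃ α ∈ adjDirs D, x ∈ Fset K α := by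
  have hn0 := h.hn0
  have hnZ : (2 : ℤ) ≤ (n : ℤ) := by exact_mod_cast h.hn
  intro k
  induction k with
  | zero =>
    intro x hx d hd hcrit
    rw [mem_Dpow_one_iff] at hd
    obtain ⟨e, he, e', he', hee', hm1, hm2⟩ := mem_criticalSet_iff.1 hcrit
    rw [mem_piece_iff hn0] at hm1 hm2
    have hsm : (n : ℝ) • (((n : ℝ) ^ (0 + 1))⁻¹ • (x + coeZ2 d)) = x + coeZ2 d := by
      rw [pow_one, smul_inv_smul₀ hn0]
    rw [hsm] at hm1 hm2
    -- pick a digit g ≠ d among e, e'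
    have hkey : ∃ g ∈ D, g ≠ d ∧ x + coeZ2 d - coeZ2 g ∈ K := by
      by_cases hed : e = d
      · exact ⟨e', he', fun hc => hee' (hed.trans hc.symm), hm2⟩
      · exact ⟨e, he, hed, hm1⟩
    obtain ⟨g, hg, hgd, hyK⟩ := hkey
    set α : ℤ × ℤ := g - d with hα
    have hxy : x - (x + coeZ2 d - coeZ2 g) = coeZ2 α := by
      apply Prod.ext <;> · simp [hα]; push_cast; ring
    have hsmall := h.diff_small hx hyK hxy
    have hαne : α ≠ (0, 0) := by
      intro hc
      apply hgd
      have : g - d = (0, 0) := hc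
      have h1 : g.1 - d.1 = 0 := congrArg Prod.fst this
      have h2 : g.2 - d.2 = 0 := congrArg Prod.snd this
      exact Prod.ext (by omega) (by omega)
    refine ⟨α, mem_adjDirs_intro hsmall.1 hsmall.2.1 hsmall.2.2.1 hsmall.2.2.2 hαne
      hd (by rwa [hα, add_sub_cancel]), ?_⟩
    rw [mem_Fset_iff]
    refine ⟨hx, ?_⟩
    have : x - coeZ2 α = x + coeZ2 d - coeZ2 g := by rw [← hxy]; abel
    rwa [this]
  | succ k IH =>
    intro x hx d hd hcrit
    have hDp : Dpow n D (k + 1 + 1) = Set.image2 (fun a b => (n : ℤ) • a + b) (Dpow n D (k + 1)) D := rfl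
    rw [hDp] at hd
    obtain ⟨a, ha, b, hb, rfl⟩ := hd
    set u : ℝ × ℝ := pieceMap n b x with hu
    have huK : u ∈ K := h.piece_subset hb hx
    have hw : ((n : ℝ) ^ (k + 1))⁻¹ • (u + coeZ2 a) =
        ((n : ℝ) ^ (k + 1 + 1))⁻¹ • (x + coeZ2 ((n : ℤ) • a + b)) := by
      apply Prod.ext
      · simp only [Prod.smul_fst, Prod.fst_add, pieceMap_fst, coeZ2_fst, smul_eq_mul, hu,
          Prod.smul_fst, Prod.fst_add]
        push_cast
        field_simp
        ring
      · simp only [Prod.smul_snd, Prod.snd_add, pieceMap_snd, coeZ2_snd, smul_eq_mul, hu,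
          Prod.smul_snd, Prod.snd_add]
        push_cast
        field_simp
        ring
    rw [← hw] at hcrit
    obtain ⟨α, hα, huF⟩ := IH u huK a ha hcrit
    rw [mem_Fset_iff] at huF
    obtain ⟨-, huα⟩ := huF
    obtain ⟨c, hc, y, hyK, hcy⟩ := h.mem_K_iff.1 huα
    set β : ℤ × ℤ := ((n : ℤ) * α.1 + c.1 - b.1, (n : ℤ) * α.2 + c.2 - b.2) with hβ
    -- x - y = coeZ2 β
    have hu1 : (n : ℝ) * u.1 = x.1 + (b.1 : ℝ) := by
      simp only [hu, pieceMap_fst]; field_simp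
    have hu2 : (n : ℝ) * u.2 = x.2 + (b.2 : ℝ) := by
      simp only [hu, pieceMap_snd]; field_simp
    have hy1 : y.1 + (c.1 : ℝ) = (n : ℝ) * (u.1 - (α.1 : ℝ)) := by
      have := congrArg Prod.fst hcy
      simp only [pieceMap_fst, Prod.fst_sub, coeZ2_fst] at this
      rw [← this]; field_simp
    have hy2 : y.2 + (c.2 : ℝ) = (n : ℝ) * (u.2 - (α.2 : ℝ)) := by
      have := congrArg Prod.snd hcy
      simp only [pieceMap_snd, Prod.snd_sub, coeZ2_snd] at this
      rw [← this]; field_simp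
    have hxy : x - y = coeZ2 β := by
      apply Prod.ext
      · simp only [Prod.fst_sub, coeZ2_fst, hβ]
        push_cast
        nlinarith [hu1, hy1]
      · simp only [Prod.snd_sub, coeZ2_snd, hβ]
        push_cast
        nlinarith [hu2, hy2]
    have hsm := h.diff_small hx hyK hxy
    have hxβ : x - coeZ2 β ∈ K := by
      have : x - coeZ2 β = y := by rw [← hxy]; abel
      rwa [this]
    have hαb := adjDirs_bounds hα
    have hαne := (adjDirs_elim hα).1
    have hαne' : ¬(α.1 = 0 ∧ α.2 = 0) := fun hcon => hαne (Prod.ext hcon.1 hcon.2)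
    have hbd := h.digit_bounds hb
    have hcd := h.digit_bounds hc
    have hβ1 : β.1 = (n : ℤ) * α.1 + c.1 - b.1 := rfl
    have hβ2 : β.2 = (n : ℤ) * α.2 + c.2 - b.2 := rfl
    have htr1 : (α.1 = 0 ∧ β.1 = c.1 - b.1) ∨ (α.1 = 1 ∧ β.1 = 1) ∨ (α.1 = -1 ∧ β.1 = -1) := by
      rcases (by omega : α.1 = -1 ∨ α.1 = 0 ∨ α.1 = 1) with h' | h' | h'
      · right; right
        refine ⟨h', ?_⟩
        have hv : β.1 = -(n : ℤ) + c.1 - b.1 := by rw [hβ1, h']; ring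
        omega
      · left
        exact ⟨h', by rw [hβ1, h']; ring⟩
      · right; left
        refine ⟨h', ?_⟩
        have hv : β.1 = (n : ℤ) + c.1 - b.1 := by rw [hβ1, h']; ring
        omega
    have htr2 : (α.2 = 0 ∧ β.2 = c.2 - b.2) ∨ (α.2 = 1 ∧ β.2 = 1) ∨ (α.2 = -1 ∧ β.2 = -1) := by
      rcases (by omega : α.2 = -1 ∨ α.2 = 0 ∨ α.2 = 1) with h' | h' | h'
      · right; right
        refine ⟨h', ?_⟩
        have hv : β.2 = -(n : ℤ) + c.2 - b.2 := by rw [hβ2, h']; ring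
        omega
      · left
        exact ⟨h', by rw [hβ2, h']; ring⟩
      · right; left
        refine ⟨h', ?_⟩
        have hv : β.2 = (n : ℤ) + c.2 - b.2 := by rw [hβ2, h']; ring
        omega
    have hβne : β ≠ (0, 0) := by
      intro hcon
      have hb1 : β.1 = 0 := congrArg Prod.fst hcon
      have hb2 : β.2 = 0 := congrArg Prod.snd hcon
      rcases htr1 with ⟨h1, -⟩ | ⟨-, h2⟩ | ⟨-, h2⟩ <;>
        rcases htr2 with ⟨h3, -⟩ | ⟨-, h4⟩ | ⟨-, h4⟩ <;> omega
    by_cases hAD : ∃ q ∈ D, q + β ∈ D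
    · obtain ⟨q, hq, hq'⟩ := hAD
      exact ⟨β, mem_adjDirs_intro hsm.1 hsm.2.1 hsm.2.2.1 hsm.2.2.2 hβne hq hq',
        mem_Fset_iff.2 ⟨hx, hxβ⟩⟩
    · exfalso
      push_neg at hAD
      have hβα : β ≠ α := by
        intro hcon
        obtain ⟨-, q, hq, hq'⟩ := adjDirs_elim hα
        exact hAD q hq (by rwa [hcon])
      have hβαne : ¬(β.1 = α.1 ∧ β.2 = α.2) := fun hcon => hβα (Prod.ext hcon.1 hcon.2)
      have hboth : (β.1 = 1 ∨ β.1 = -1) ∧ (β.2 = 1 ∨ β.2 = -1) := by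
        rcases htr1 with ⟨h1, h2⟩ | ⟨h1, h2⟩ | ⟨h1, h2⟩ <;>
          rcases htr2 with ⟨h3, h4⟩ | ⟨h3, h4⟩ | ⟨h3, h4⟩ <;> omega
      have hbx := h.K_bounds x hx
      have hby := h.K_bounds _ hxβ
      have hby1 : x.1 - (β.1 : ℝ) = (x - coeZ2 β).1 := by simp
      have hby2 : x.2 - (β.2 : ℝ) = (x - coeZ2 β).2 := by simp
      -- the four corner cases
      rcases hboth.1 with hs1 | hs1 <;> rcases hboth.2 with hs2 | hs2
      · -- β = (1,1) : x = (1,1), x - β = (0,0)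
        have hx1 : x.1 = 1 := by
          rw [hs1] at hby1; push_cast at hby1
          linarith [hbx.2.1, hby.1, hby1 ▸ (hby.1 : (0:ℝ) ≤ (x - coeZ2 β).1)]
        have hx2 : x.2 = 1 := by
          rw [hs2] at hby2; push_cast at hby2
          linarith [hbx.2.2.2, hby.2.2.1]
        have h11 : ((1 : ℝ), (1 : ℝ)) ∈ K := by
          have : x = ((1 : ℝ), (1 : ℝ)) := Prod.ext hx1 hx2
          rwa [← this]
        have h00 : ((0 : ℝ), (0 : ℝ)) ∈ K := by
          have : x - coeZ2 β = ((0 : ℝ), (0 : ℝ)) := by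
            apply Prod.ext
            · rw [← hby1, hs1]; push_cast; rw [hx1]; ring
            · rw [← hby2, hs2]; push_cast; rw [hx2]; ring
          rwa [← this]
        obtain ⟨p, hp, hp'⟩ := h.diag_pair hconn h00 h11
        exact hAD p hp (by rwa [show β = ((1 : ℤ), (1 : ℤ)) from Prod.ext hs1 hs2])
      · -- β = (1,-1) : x = (1,0), x - β = (0,1)
        have hx1 : x.1 = 1 := by
          rw [hs1] at hby1; push_cast at hby1
          linarith [hbx.2.1, hby.1]
        have hx2 : x.2 = 0 := by
          rw [hs2] at hby2; push_cast at hby2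
          linarith [hbx.2.2.1, hby.2.2.2]
        have h10 : ((1 : ℝ), (0 : ℝ)) ∈ K := by
          have : x = ((1 : ℝ), (0 : ℝ)) := Prod.ext hx1 hx2
          rwa [← this]
        have h01 : ((0 : ℝ), (1 : ℝ)) ∈ K := by
          have : x - coeZ2 β = ((0 : ℝ), (1 : ℝ)) := by
            apply Prod.ext
            · rw [← hby1, hs1]; push_cast; rw [hx1]; ring
            · rw [← hby2, hs2]; push_cast; rw [hx2]; ring
          rwa [← this]
        obtain ⟨p, hp, hp'⟩ := h.antidiag_pair hconn h10 h01
        exact hAD p hp (by rwa [show β = ((1 : ℤ), (-1 : ℤ)) from Prod.ext hs1 hs2])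
      · -- β = (-1,1) : x = (0,1), x - β = (1,0)
        have hx1 : x.1 = 0 := by
          rw [hs1] at hby1; push_cast at hby1
          linarith [hbx.1, hby.2.1]
        have hx2 : x.2 = 1 := by
          rw [hs2] at hby2; push_cast at hby2
          linarith [hbx.2.2.2, hby.2.2.1]
        have h01 : ((0 : ℝ), (1 : ℝ)) ∈ K := by
          have : x = ((0 : ℝ), (1 : ℝ)) := Prod.ext hx1 hx2
          rwa [← this]
        have h10 : ((1 : ℝ), (0 : ℝ)) ∈ K := by
          have : x - coeZ2 β = ((1 : ℝ), (0 : ℝ)) := by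
            apply Prod.ext
            · rw [← hby1, hs1]; push_cast; rw [hx1]; ring
            · rw [← hby2, hs2]; push_cast; rw [hx2]; ring
          rwa [← this]
        obtain ⟨p, hp, hp'⟩ := h.antidiag_pair hconn h10 h01
        refine hAD (p + (1, -1)) hp' ?_
        have hβv : β = ((-1 : ℤ), (1 : ℤ)) := Prod.ext hs1 hs2
        rw [hβv]
        have : p + (1, -1) + (-1, 1) = p := by
          apply Prod.ext <;> simp
        rwa [this]
      · -- β = (-1,-1) : x = (0,0), x - β = (1,1)
        have hx1 : x.1 = 0 := by
          rw [hs1] at hby1; push_cast at hby1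
          linarith [hbx.1, hby.2.1]
        have hx2 : x.2 = 0 := by
          rw [hs2] at hby2; push_cast at hby2
          linarith [hbx.2.2.1, hby.2.2.2]
        have h00 : ((0 : ℝ), (0 : ℝ)) ∈ K := by
          have : x = ((0 : ℝ), (0 : ℝ)) := Prod.ext hx1 hx2
          rwa [← this]
        have h11 : ((1 : ℝ), (1 : ℝ)) ∈ K := by
          have : x - coeZ2 β = ((1 : ℝ), (1 : ℝ)) := by
            apply Prod.ext
            · rw [← hby1, hs1]; push_cast; rw [hx1]; ring
            · rw [← hby2, hs2]; push_cast; rw [hx2]; ring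
          rwa [← this]
        obtain ⟨p, hp, hp'⟩ := h.diag_pair hconn h00 h11
        refine hAD (p + (1, 1)) hp' ?_
        have hβv : β = ((-1 : ℤ), (-1 : ℤ)) := Prod.ext hs1 hs2
        rw [hβv]
        have : p + (1, 1) + (-1, -1) = p := by
          apply Prod.ext <;> simp
        rwa [this]

/-- For a connected fractal square `K`, the self-similar boundary
is `∂K = ⋃_{α ∈ A_D} F_α`, where `F_α = K ∩ (K + α)`. -/
theorem fractalSquare_ssBoundary_eq_union_faces
    (n : ℕ) (D : Set (ℤ × ℤ)) (K : Set (ℝ × ℝ))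
    (hK : IsFractalSquare n D K) (hconn : IsConnected K) :
    ssBoundary n D K = ⋃ α ∈ adjDirs D, Fset K α := by
  have hn0 := hK.hn0
  ext x
  constructor
  · rintro ⟨hxK, k, hk1, d, hd, hcrit⟩
    obtain ⟨k', rfl⟩ : ∃ k', k = k' + 1 := ⟨k - 1, by omega⟩
    obtain ⟨α, hα, hxF⟩ := hK.boundary_step hconn k' x hxK d hd hcrit
    exact Set.mem_biUnion hα hxF
  · intro hx
    simp only [Set.mem_iUnion] at hx
    obtain ⟨α, hα, hxF⟩ := hx
    rw [mem_Fset_iff] at hxF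
    obtain ⟨hxK, hxα⟩ := hxF
    obtain ⟨hαne, q, hq, hqα⟩ := adjDirs_elim hα
    refine ⟨hxK, 1, le_refl 1, q, mem_Dpow_one_iff.2 hq, ?_⟩
    rw [mem_criticalSet_iff]
    refine ⟨q, hq, q + α, hqα, ?_, ?_, ?_⟩
    · intro hc
      apply hαne
      have h1 : q.1 = q.1 + α.1 := congrArg Prod.fst hc
      have h2 : q.2 = q.2 + α.2 := congrArg Prod.snd hc
      exact Prod.ext (by omega) (by omega)
    · rw [mem_piece_iff hn0]
      have : (n : ℝ) • (((n : ℝ) ^ 1)⁻¹ • (x + coeZ2 q)) - coeZ2 q = x := by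
        rw [pow_one, smul_inv_smul₀ hn0]; abel
      rwa [this]
    · rw [mem_piece_iff hn0]
      have : (n : ℝ) • (((n : ℝ) ^ 1)⁻¹ • (x + coeZ2 q)) - coeZ2 (q + α) = x - coeZ2 α := by
        rw [pow_one, smul_inv_smul₀ hn0]
        apply Prod.ext <;> · simp; push_cast; ring
      rwa [this]
end
end

section
/- Let K₁ and K₂ be fractal segments of order n with digit sets D₁ and D₂ respectively, and let F₀ = K₁ ∩ K₂. Then F₀ = (F₀ + G₀)/n ∪ (F_{−1} + G_{−1})/n ∪ (F₁ + G₁)/n, where for a ∈ {−1,0,1}, F_a = K₁ ∩ (K₂ + a) and G_a = D₁ ∩ (D₂ − a). -/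
open Set Pointwise

noncomputable section

/-- `K` is a fractal segment of order `n` with (nonempty) digit set `D ⊆ {0,…,n-1}`:
a nonempty compact set with `K = (K + D)/n`. -/
def IsFractalSegment (n : ℕ) (D : Set ℤ) (K : Set ℝ) : Prop :=
  2 ≤ n ∧ D.Nonempty ∧ D ⊆ Set.Icc 0 ((n : ℤ) - 1) ∧
  K.Nonempty ∧ IsCompact K ∧
  K = ⋃ d ∈ D, (fun x => (x + (d : ℝ)) / n) '' K

/-- `F_a = K₁ ∩ (K₂ + a)`. -/
def segF (K₁ K₂ : Set ℝ) (a : ℤ) : Set ℝ := K₁ ∩ ((· + (a : ℝ)) '' K₂)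

/-- `G_a = D₁ ∩ (D₂ - a)`. -/
def segG (D₁ D₂ : Set ℤ) (a : ℤ) : Set ℤ := D₁ ∩ ((· - a) '' D₂)

lemma fractal_subset_Icc {n : ℕ} {D : Set ℤ} {K : Set ℝ}
    (h : IsFractalSegment n D K) : K ⊆ Set.Icc 0 1 := by
  obtain ⟨hn, hD, hDsub, hKne, hKc, hKeq⟩ := h
  have hn2 : (2:ℝ) ≤ (n:ℝ) := by exact_mod_cast hn
  have hbdd := hKc.isBounded
  have hM := hKc.sSup_mem hKne
  have hm := hKc.sInf_mem hKne
  have hn0 : (0:ℝ) < n := by linarith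
  rw [hKeq] at hM hm
  simp only [Set.mem_iUnion, Set.mem_image] at hM hm
  obtain ⟨d₁, hd₁, y₁, hy₁, hMeq⟩ := hM
  obtain ⟨d₂, hd₂, y₂, hy₂, hmeq⟩ := hm
  rw [← hKeq] at hMeq hmeq
  rw [div_eq_iff (ne_of_gt hn0)] at hMeq hmeq
  have hMle : sSup K ≤ 1 := by
    have hy₁le : y₁ ≤ sSup K := le_csSup hbdd.bddAbove hy₁
    have hd₁le : (d₁:ℝ) ≤ (n:ℝ) - 1 := by
      have := (hDsub hd₁).2; push_cast; exact_mod_cast this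
    nlinarith [hMeq]
  have hmge : 0 ≤ sInf K := by
    have hy₂ge : sInf K ≤ y₂ := csInf_le hbdd.bddBelow hy₂
    have hd₂ge : (0:ℝ) ≤ (d₂:ℝ) := by exact_mod_cast (hDsub hd₂).1
    nlinarith [hmeq]
  intro x hx
  exact ⟨le_trans hmge (csInf_le hbdd.bddBelow hx),
    le_trans (le_csSup hbdd.bddAbove hx) hMle⟩

/-- For fractal segments `K₁, K₂`, the intersection `F₀ = K₁ ∩ K₂`
satisfies `F₀ = (F₀ + G₀)/n ∪ (F₋₁ + G₋₁)/n ∪ (F₁ + G₁)/n`. -/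
theorem fractalSegment_intersection_eq
    (n : ℕ) (D₁ D₂ : Set ℤ) (K₁ K₂ : Set ℝ)
    (h1 : IsFractalSegment n D₁ K₁) (h2 : IsFractalSegment n D₂ K₂) :
    segF K₁ K₂ 0 =
      (⋃ g ∈ segG D₁ D₂ 0, (fun x => (x + (g : ℝ)) / n) '' segF K₁ K₂ 0) ∪
      (⋃ g ∈ segG D₁ D₂ (-1), (fun x => (x + (g : ℝ)) / n) '' segF K₁ K₂ (-1)) ∪
      (⋃ g ∈ segG D₁ D₂ 1, (fun x => (x + (g : ℝ)) / n) '' segF K₁ K₂ 1) := by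
  have hI₁ := fractal_subset_Icc h1
  have hI₂ := fractal_subset_Icc h2
  obtain ⟨hn, hD₁, hD₁sub, hK₁ne, hK₁c, hK₁eq⟩ := h1
  obtain ⟨-, hD₂, hD₂sub, hK₂ne, hK₂c, hK₂eq⟩ := h2
  have hn0 : (0:ℝ) < n := by
    have : (2:ℝ) ≤ (n:ℝ) := by exact_mod_cast hn
    linarith
  ext x
  simp only [segF, segG, Set.mem_inter_iff, Set.mem_image, Set.mem_union,
    Set.mem_iUnion, Int.cast_zero, add_zero, Int.cast_neg, Int.cast_one]
  constructor
  · rintro ⟨hx₁, z, hz, rfl⟩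
    -- here z + 0 = x i.e. x = z; after add_zero the image is (fun x => x)
    have hx₂ : z ∈ K₂ := hz
    -- x ∈ K₁, unfold self-similarity on both
    have h1' : z ∈ ⋃ d ∈ D₁, (fun x => (x + (d : ℝ)) / n) '' K₁ := hK₁eq ▸ hx₁
    have h2' : z ∈ ⋃ d ∈ D₂, (fun x => (x + (d : ℝ)) / n) '' K₂ := hK₂eq ▸ hx₂
    simp only [Set.mem_iUnion, Set.mem_image] at h1' h2'
    obtain ⟨d₁, hd₁, y₁, hy₁, he₁⟩ := h1'
    obtain ⟨d₂, hd₂, y₂, hy₂, he₂⟩ := h2'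
    have hsum : y₁ + (d₁:ℝ) = y₂ + (d₂:ℝ) := by
      have := he₁.trans he₂.symm
      field_simp at this
      linarith
    set a : ℤ := d₂ - d₁ with ha
    have hya : y₁ = y₂ + (a:ℝ) := by push_cast [ha]; linarith
    have hb₁ := hI₁ hy₁
    have hb₂ := hI₂ hy₂
    have haR₁ : (-1:ℝ) ≤ (a:ℝ) := by
      rw [hya] at hb₁; simp only [Set.mem_Icc] at hb₁ hb₂; linarith [hb₁.1, hb₂.2]
    have haR₂ : (a:ℝ) ≤ 1 := by
      rw [hya] at hb₁; simp only [Set.mem_Icc] at hb₁ hb₂; linarith [hb₁.2, hb₂.1]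
    have hal : -1 ≤ a := by exact_mod_cast haR₁
    have har : a ≤ 1 := by exact_mod_cast haR₂
    have hgd : d₁ = d₂ - a := by omega
    interval_cases a
    · -- a = -1
      refine Or.inl (Or.inr ⟨d₁, ⟨hd₁, d₂, hd₂, by omega⟩, y₁, ⟨hy₁, y₂, hy₂, ?_⟩, he₁⟩)
      push_cast at hya ⊢; linarith
    · -- a = 0
      refine Or.inl (Or.inl ⟨d₁, ⟨hd₁, d₂, hd₂, by omega⟩, y₁, ⟨hy₁, y₂, hy₂, ?_⟩, he₁⟩)
      push_cast at hya ⊢; linarith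
    · -- a = 1
      refine Or.inr ⟨d₁, ⟨hd₁, d₂, hd₂, by omega⟩, y₁, ⟨hy₁, y₂, hy₂, ?_⟩, he₁⟩
      push_cast at hya ⊢; linarith
  · have memK₁ : ∀ (g : ℤ) (y : ℝ), g ∈ D₁ → y ∈ K₁ → (y + (g:ℝ)) / n ∈ K₁ := by
      intro g y hg hy
      rw [hK₁eq]; simp only [Set.mem_iUnion, Set.mem_image]
      exact ⟨g, hg, y, hy, rfl⟩
    have memK₂ : ∀ (e : ℤ) (z : ℝ), e ∈ D₂ → z ∈ K₂ → (z + (e:ℝ)) / n ∈ K₂ := by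
      intro e z he hz
      rw [hK₂eq]; simp only [Set.mem_iUnion, Set.mem_image]
      exact ⟨e, he, z, hz, rfl⟩
    rintro ((h | h) | h)
    · obtain ⟨g, ⟨hg, e, he, hge⟩, y, ⟨hy, z, hz, hzy⟩, rfl⟩ := h
      have hge' : (e:ℝ) - 0 = g := by exact_mod_cast hge
      have heq : z + (e:ℝ) = y + g := by linarith
      exact ⟨memK₁ g y hg hy, (z + (e:ℝ)) / n, memK₂ e z he hz, by rw [heq]⟩
    · obtain ⟨g, ⟨hg, e, he, hge⟩, y, ⟨hy, z, hz, hzy⟩, rfl⟩ := h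
      have hge' : (e:ℝ) - (-1:ℝ) = g := by exact_mod_cast hge
      have heq : z + (e:ℝ) = y + g := by linarith
      exact ⟨memK₁ g y hg hy, (z + (e:ℝ)) / n, memK₂ e z he hz, by rw [heq]⟩
    · obtain ⟨g, ⟨hg, e, he, hge⟩, y, ⟨hy, z, hz, hzy⟩, rfl⟩ := h
      have hge' : (e:ℝ) - 1 = g := by exact_mod_cast hge
      have heq : z + (e:ℝ) = y + g := by linarith
      exact ⟨memK₁ g y hg hy, (z + (e:ℝ)) / n, memK₂ e z he hz, by rw [heq]⟩
end
end

section
/- Let K₁ and K₂ be fractal segments of order n with digit sets D₁ and D₂. For a ∈ {−1,0,1} set F_a = K₁ ∩ (K₂ + a) and G_a = D₁ ∩ (D₂ − a). If G₀ = D₁ ∩ D₂ = ∅, then F₀ = K₁ ∩ K₂ equals (F₁ + G₁)/n ∪ (F_{−1} + G_{−1})/n; in particular F₀ is finite, of cardinality |F₁|·|G₁| + |F_{−1}|·|G_{−1}|. -/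
open Set Pointwise

noncomputable section

lemma seg_subset_Icc {n : ℕ} {D : Set ℤ} {K : Set ℝ}
    (h : IsFractalSegment n D K) : K ⊆ Set.Icc (0:ℝ) 1 := by
  obtain ⟨hn, hDne, hDsub, hKne, hKc, hKeq⟩ := h
  have hn2 : (2:ℝ) ≤ n := by exact_mod_cast hn
  obtain ⟨M, hMmem, hMub⟩ := hKc.exists_isGreatest hKne
  obtain ⟨m, hmmem, hmlb⟩ := hKc.exists_isLeast hKne
  have hM1 : M ≤ 1 := by
    rw [hKeq] at hMmem
    simp only [mem_iUnion, mem_image] at hMmem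
    obtain ⟨d, hd, x, hx, hxe⟩ := hMmem
    have hdle : (d:ℝ) ≤ (n:ℝ) - 1 := by
      have := (hDsub hd).2
      have : (d:ℝ) ≤ ((n:ℤ) - 1 : ℤ) := by exact_mod_cast this
      push_cast at this; linarith
    have hxM : x ≤ M := hMub hx
    have : x + d = M * n := by field_simp at hxe; linarith
    nlinarith
  have hm0 : 0 ≤ m := by
    rw [hKeq] at hmmem
    simp only [mem_iUnion, mem_image] at hmmem
    obtain ⟨d, hd, x, hx, hxe⟩ := hmmem
    have hdge : (0:ℝ) ≤ (d:ℝ) := by exact_mod_cast (hDsub hd).1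
    have hxm : m ≤ x := hmlb hx
    have : x + d = m * n := by field_simp at hxe; linarith
    nlinarith
  intro x hx
  exact ⟨le_trans hm0 (hmlb hx), le_trans (hMub hx) hM1⟩

lemma card_aux (n : ℕ) (hn : 0 < n) (c : ℝ) (s : Set ℝ) (hs : s ⊆ {c})
    (G : Set ℤ) (hG : G.Finite) :
    (⋃ g ∈ G, (fun x => (x + (g:ℝ))/n) '' s).Finite ∧
    Nat.card (⋃ g ∈ G, (fun x => (x + (g:ℝ))/n) '' s : Set ℝ) = Nat.card s * Nat.card G := by
  have hn0 : (n:ℝ) ≠ 0 := by positivity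
  rcases Set.subset_singleton_iff_eq.mp hs with h | h
  · simp [h]
  · subst h
    have hset : (⋃ g ∈ G, (fun x => (x + (g:ℝ))/n) '' ({c} : Set ℝ))
        = (fun g : ℤ => (c + (g:ℝ))/n) '' G := by
      ext x
      simp [eq_comm]
    rw [hset]
    have hinj : Function.Injective (fun g : ℤ => (c + (g:ℝ))/n) := by
      intro a b hab
      simp only at hab
      field_simp at hab
      exact_mod_cast add_left_cancel hab
    refine ⟨hG.image _, ?_⟩
    rw [Nat.card_coe_set_eq, Set.ncard_image_of_injective _ hinj,
      Nat.card_coe_set_eq, Nat.card_coe_set_eq]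
    simp


/-- If `G₀ = D₁ ∩ D₂ = ∅`, then
`F₀ = (F₁ + G₁)/n ∪ (F₋₁ + G₋₁)/n`; in particular `F₀` is finite, of cardinality
`|F₁|·|G₁| + |F₋₁|·|G₋₁|`. -/
theorem fractalSegment_intersection_of_empty_G0
    (n : ℕ) (D₁ D₂ : Set ℤ) (K₁ K₂ : Set ℝ)
    (h1 : IsFractalSegment n D₁ K₁) (h2 : IsFractalSegment n D₂ K₂)
    (hG0 : D₁ ∩ D₂ = ∅) :
    K₁ ∩ K₂ =
      (⋃ g ∈ segG D₁ D₂ 1, (fun x => (x + (g : ℝ)) / n) '' segF K₁ K₂ 1) ∪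
      (⋃ g ∈ segG D₁ D₂ (-1), (fun x => (x + (g : ℝ)) / n) '' segF K₁ K₂ (-1)) ∧
    (K₁ ∩ K₂).Finite ∧
    Nat.card (K₁ ∩ K₂ : Set ℝ) =
      Nat.card (segF K₁ K₂ 1) * Nat.card (segG D₁ D₂ 1) +
      Nat.card (segF K₁ K₂ (-1)) * Nat.card (segG D₁ D₂ (-1)) := by
  have hsub1 := seg_subset_Icc h1
  have hsub2 := seg_subset_Icc h2
  obtain ⟨hn, hD₁ne, hD₁sub, hK₁ne, hK₁c, hK₁eq⟩ := h1
  obtain ⟨_, hD₂ne, hD₂sub, hK₂ne, hK₂c, hK₂eq⟩ := h2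
  have hnpos : (0:ℝ) < n := by positivity
  have hn0 : (n:ℝ) ≠ 0 := ne_of_gt hnpos
  -- F₁ ⊆ {1}, F₋₁ ⊆ {0}
  have hF1 : segF K₁ K₂ 1 ⊆ {(1:ℝ)} := by
    rintro y ⟨hy1, z, hz, rfl⟩
    have h1 := hsub2 hz
    have h2 := hsub1 hy1
    simp only [mem_Icc] at h1 h2
    have : z + ((1:ℤ):ℝ) = 1 := by push_cast at h2 ⊢; linarith
    simpa using this
  have hFm1 : segF K₁ K₂ (-1) ⊆ {(0:ℝ)} := by
    rintro y ⟨hy1, z, hz, rfl⟩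
    have h1 := hsub2 hz
    have h2 := hsub1 hy1
    simp only [mem_Icc] at h1 h2
    have : z + ((-1:ℤ):ℝ) = 0 := by push_cast at h2 ⊢; linarith
    simpa using this
  have hG1fin : (segG D₁ D₂ 1).Finite :=
    (Set.finite_Icc (0:ℤ) ((n:ℤ)-1)).subset (fun g hg => hD₁sub hg.1)
  have hGm1fin : (segG D₁ D₂ (-1)).Finite :=
    (Set.finite_Icc (0:ℤ) ((n:ℤ)-1)).subset (fun g hg => hD₁sub hg.1)
  -- the set equality
  have hmain : K₁ ∩ K₂ =
      (⋃ g ∈ segG D₁ D₂ 1, (fun x => (x + (g : ℝ)) / n) '' segF K₁ K₂ 1) ∪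
      (⋃ g ∈ segG D₁ D₂ (-1), (fun x => (x + (g : ℝ)) / n) '' segF K₁ K₂ (-1)) := by
    ext x
    constructor
    · rintro ⟨hx1, hx2⟩
      rw [hK₁eq] at hx1
      rw [hK₂eq] at hx2
      simp only [mem_iUnion, mem_image] at hx1 hx2
      obtain ⟨d₁, hd₁, y, hy, hye⟩ := hx1
      obtain ⟨d₂, hd₂, z, hz, hze⟩ := hx2
      have heq : y + (d₁:ℝ) = z + (d₂:ℝ) := by
        have : (y + d₁)/(n:ℝ) = (z + d₂)/n := by rw [hye, hze]
        field_simp at this; linarith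
      have hyI := hsub1 hy
      have hzI := hsub2 hz
      simp only [mem_Icc] at hyI hzI
      have habs : (d₂ - d₁ : ℤ) = 1 ∨ (d₂ - d₁ : ℤ) = -1 ∨ (d₂ - d₁ : ℤ) = 0 := by
        have h1 : ((d₂ - d₁ : ℤ) : ℝ) ≤ 1 := by push_cast; linarith
        have h2 : (-1 : ℝ) ≤ ((d₂ - d₁ : ℤ) : ℝ) := by push_cast; linarith
        have h1' : (d₂ - d₁ : ℤ) ≤ 1 := by exact_mod_cast h1
        have h2' : (-1 : ℤ) ≤ (d₂ - d₁ : ℤ) := by exact_mod_cast h2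
        omega
      rcases habs with he | he | he
      · -- d₂ = d₁ + 1 : a = 1 case
        left
        have hd₂e : d₂ = d₁ + 1 := by omega
        refine mem_biUnion (show d₁ ∈ segG D₁ D₂ 1 from ⟨hd₁, d₂, hd₂, by change d₂ - 1 = d₁; omega⟩) ?_
        refine ⟨y, ⟨hy, z, hz, ?_⟩, hye⟩
        have : (d₂:ℝ) = d₁ + 1 := by exact_mod_cast hd₂e
        push_cast
        linarith
      · -- a = -1 case
        right
        have hd₂e : d₂ = d₁ - 1 := by omega
        refine mem_biUnion (show d₁ ∈ segG D₁ D₂ (-1) from ⟨hd₁, d₂, hd₂, by change d₂ - (-1) = d₁; omega⟩) ?_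
        refine ⟨y, ⟨hy, z, hz, ?_⟩, hye⟩
        have : (d₂:ℝ) = d₁ - 1 := by exact_mod_cast hd₂e
        push_cast
        linarith
      · exfalso
        have : d₁ ∈ D₁ ∩ D₂ := ⟨hd₁, by rwa [show d₁ = d₂ by omega]⟩
        rw [hG0] at this
        exact this
    · intro hx
      have key : ∀ a : ℤ, ∀ g ∈ segG D₁ D₂ a, ∀ y ∈ segF K₁ K₂ a,
          (y + (g:ℝ))/n = x → x ∈ K₁ ∩ K₂ := by
        rintro a g ⟨hgD₁, d₂, hd₂, hgd⟩ y ⟨hyK₁, z, hz, hzy⟩ hxe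
        constructor
        · rw [hK₁eq]
          simp only [mem_iUnion, mem_image]
          exact ⟨g, hgD₁, y, hyK₁, hxe⟩
        · rw [hK₂eq]
          simp only [mem_iUnion, mem_image]
          refine ⟨d₂, hd₂, z, hz, ?_⟩
          have hgr : (g:ℝ) = (d₂:ℝ) - (a:ℝ) := by exact_mod_cast hgd.symm
          rw [← hxe]
          congr 1
          rw [← hzy, hgr]
          ring
      rcases hx with hx | hx <;>
      · simp only [mem_iUnion, mem_image] at hx
        obtain ⟨g, hg, y, hy, hxe⟩ := hx
        exact key _ g hg y hy hxe
  -- cardinality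
  obtain ⟨hAfin, hAcard⟩ := card_aux n (by omega) 1 (segF K₁ K₂ 1) hF1 (segG D₁ D₂ 1) hG1fin
  obtain ⟨hBfin, hBcard⟩ := card_aux n (by omega) 0 (segF K₁ K₂ (-1)) hFm1 (segG D₁ D₂ (-1)) hGm1fin
  have hdisj : Disjoint (⋃ g ∈ segG D₁ D₂ 1, (fun x => (x + (g : ℝ)) / n) '' segF K₁ K₂ 1)
      (⋃ g ∈ segG D₁ D₂ (-1), (fun x => (x + (g : ℝ)) / n) '' segF K₁ K₂ (-1)) := by
    rw [Set.disjoint_left]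
    rintro x hxA hxB
    simp only [mem_iUnion, mem_image] at hxA hxB
    obtain ⟨g, hg, y, hy, hye⟩ := hxA
    obtain ⟨g', hg', y', hy', hye'⟩ := hxB
    have hy1 : y = 1 := hF1 hy
    have hy0 : y' = 0 := hFm1 hy'
    subst hy1; subst hy0
    have : (1 + (g:ℝ))/n = (0 + (g':ℝ))/n := by rw [hye, hye']
    field_simp at this
    have hr : (g':ℝ) = (g:ℝ) + 1 := by linarith
    have hgg' : g' = g + 1 := by exact_mod_cast hr
    obtain ⟨_, d₂, hd₂, hgd⟩ := hg
    have hgd' : d₂ - 1 = g := hgd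
    have : g' ∈ D₁ ∩ D₂ := ⟨hg'.1, by rw [hgg']; rwa [show g + 1 = d₂ by omega]⟩
    rw [hG0] at this
    exact this
  refine ⟨hmain, ?_, ?_⟩
  · rw [hmain]; exact hAfin.union hBfin
  · rw [hmain, Nat.card_coe_set_eq,
      Set.ncard_union_eq hdisj hAfin hBfin,
      ← Nat.card_coe_set_eq, ← Nat.card_coe_set_eq, hAcard, hBcard]
end
end

section
/- Let K be a fractal square of order n with digit set D which is a dendrite, and suppose that A_D = {α, −α, β, −β} where α ∈ {(1,1),(1,−1)} and β ∈ {(1,0),(0,1)}, with A_D = {γ ∈ {−1,0,1}² \ {(0,0)} : D ∩ (D + γ) ≠ ∅}. Then for every k ≥ 1 there is no d ∈ ℤ² such that all four points d, d − α, d − β, d − α − β belong to D^k. -/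
open Set Pointwise

noncomputable section

private lemma delta_small' {n δ c : ℤ} (hn : 2 ≤ n) (hc : -n ≤ c) (hc' : c ≤ n)
    (h : n * δ = c) : δ = -1 ∨ δ = 0 ∨ δ = 1 := by
  have h1 : -1 ≤ δ := by nlinarith
  have h2 : δ ≤ 1 := by nlinarith
  omega

lemma no_pair' (n : ℕ) (D : Set (ℤ × ℤ)) (hn : 2 ≤ n)
    (hD : D ⊆ Set.Icc (0, 0) ((n : ℤ) - 1, (n : ℤ) - 1))
    (γ : ℤ × ℤ)
    (hγ : γ = (0, 1) ∨ γ = (1, 0) ∨ γ = (0, -1) ∨ γ = (-1, 0))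
    (hA : γ ∉ adjDirs D) :
    ∀ k, ∀ x : ℤ × ℤ, x ∈ Dpow n D k → x + γ ∈ Dpow n D k → False := by
  have hn' : (2 : ℤ) ≤ (n : ℤ) := by exact_mod_cast hn
  have hγmem : γ ∈ ({-1, 0, 1} ×ˢ {-1, 0, 1} : Set (ℤ × ℤ)) := by
    rcases hγ with rfl | rfl | rfl | rfl <;> simp [Set.mem_prod]
  have hγne : γ ≠ (0, 0) := by
    rcases hγ with rfl | rfl | rfl | rfl <;> simp [Prod.ext_iff]
  have hfacts : -1 ≤ γ.1 ∧ γ.1 ≤ 1 ∧ -1 ≤ γ.2 ∧ γ.2 ≤ 1 ∧ (γ.1 = 0 ∨ γ.2 = 0) ∧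
      ¬(γ.1 = 0 ∧ γ.2 = 0) := by
    rcases hγ with rfl | rfl | rfl | rfl <;> norm_num
  obtain ⟨hf1, hf2, hf3, hf4, hf5, hf6⟩ := hfacts
  intro k
  induction k with
  | zero =>
    intro x hx hx'
    simp only [Dpow, Set.mem_singleton_iff] at hx hx'
    subst hx
    apply hγne
    have : (0, 0) + γ = ((0 : ℤ), (0 : ℤ)) + (0, 0) := by rw [hx']; simp
    simpa [Prod.ext_iff] using this
  | succ k ih =>
    intro x hx hx'
    obtain ⟨a, ha, b, hb, hab⟩ := hx
    obtain ⟨a', ha', b', hb', hab'⟩ := hx'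
    have hbI := hD hb
    have hbI' := hD hb'
    simp only [Set.mem_Icc, Prod.le_def] at hbI hbI'
    dsimp only at hab hab'
    have key : (n : ℤ) • a' + b' = ((n : ℤ) • a + b) + γ := by rw [hab, hab']
    have e1 : (n : ℤ) * a'.1 + b'.1 = (n : ℤ) * a.1 + b.1 + γ.1 := by
      have := congrArg Prod.fst key
      simpa [Prod.fst_add, Prod.smul_fst, smul_eq_mul] using this
    have e2 : (n : ℤ) * a'.2 + b'.2 = (n : ℤ) * a.2 + b.2 + γ.2 := by
      have := congrArg Prod.snd key
      simpa [Prod.snd_add, Prod.smul_snd, smul_eq_mul] using this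
    have E1 : (n : ℤ) * (a'.1 - a.1) = γ.1 + b.1 - b'.1 := by linear_combination e1
    have E2 : (n : ℤ) * (a'.2 - a.2) = γ.2 + b.2 - b'.2 := by linear_combination e2
    have hd1 := delta_small' hn' (by omega) (by omega) E1
    have hd2 := delta_small' hn' (by omega) (by omega) E2
    rcases hd1 with h1 | h1 | h1 <;> rcases hd2 with h2 | h2 | h2 <;>
        rw [h1] at E1 <;> rw [h2] at E2 <;>
      first
      | (exfalso; omega)
      | (apply ih a ha
         have haa : a + γ = a' := by
           simp only [Prod.ext_iff, Prod.fst_add, Prod.snd_add]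
           constructor <;> omega
         rw [haa]; exact ha')
      | (apply hA
         refine ⟨hγmem, hγne, ⟨b', hb', b, hb, ?_⟩⟩
         simp only [Prod.ext_iff, Prod.fst_add, Prod.snd_add]
         constructor <;> omega)

/-- (Case **C**.) Let `K` be a fractal square dendrite with
`A_D = {α, -α, β, -β}`, where `α ∈ {(1,1),(1,-1)}` and `β ∈ {(1,0),(0,1)}`. Then for
every `k ≥ 1` the digit set `D^k` contains no quadruple `{d, d-α, d-β, d-α-β}`. -/
theorem fractalSquare_dendrite_no_quadruple_caseC
    (n : ℕ) (D : Set (ℤ × ℤ)) (K : Set (ℝ × ℝ))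
    (hK : IsFractalSquare n D K) (hden : IsDendrite K)
    (α β : ℤ × ℤ)
    (hα : α ∈ ({(1, 1), (1, -1)} : Set (ℤ × ℤ)))
    (hβ : β ∈ ({(1, 0), (0, 1)} : Set (ℤ × ℤ)))
    (hAD : adjDirs D = {α, -α, β, -β}) :
    ∀ k ≥ 1, ¬ ∃ d : ℤ × ℤ, d ∈ Dpow n D k ∧ d - α ∈ Dpow n D k ∧
      d - β ∈ Dpow n D k ∧ d - α - β ∈ Dpow n D k := by
  obtain ⟨hn, hD, -⟩ := hK
  intro k _hk
  rintro ⟨d, h0, h1, h2, h3⟩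
  simp only [Set.mem_insert_iff, Set.mem_singleton_iff] at hα hβ
  rcases hα with rfl | rfl <;> rcases hβ with rfl | rfl
  · -- α = (1,1), β = (1,0), γ = (0,1) : d - α + γ = d - β
    refine no_pair' n D hn hD (0, 1) (by tauto) ?_ k (d - (1, 1)) h1 ?_
    · rw [hAD]; intro h
      simp only [Set.mem_insert_iff, Set.mem_singleton_iff, Prod.ext_iff] at h
      norm_num at h
    · have : d - ((1, 1) : ℤ × ℤ) + (0, 1) = d - (1, 0) := by
        obtain ⟨d1, d2⟩ := d
        simp only [Prod.mk_sub_mk, Prod.mk_add_mk, Prod.mk.injEq]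
        omega
      rw [this]; exact h2
  · -- α = (1,1), β = (0,1), γ = (1,0) : d - α + γ = d - β
    refine no_pair' n D hn hD (1, 0) (by tauto) ?_ k (d - (1, 1)) h1 ?_
    · rw [hAD]; intro h
      simp only [Set.mem_insert_iff, Set.mem_singleton_iff, Prod.ext_iff] at h
      norm_num at h
    · have : d - ((1, 1) : ℤ × ℤ) + (1, 0) = d - (0, 1) := by
        obtain ⟨d1, d2⟩ := d
        simp only [Prod.mk_sub_mk, Prod.mk_add_mk, Prod.mk.injEq]
        omega
      rw [this]; exact h2
  · -- α = (1,-1), β = (1,0), γ = (0,-1) : d - α + γ = d - β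
    refine no_pair' n D hn hD (0, -1) (by tauto) ?_ k (d - (1, -1)) h1 ?_
    · rw [hAD]; intro h
      simp only [Set.mem_insert_iff, Set.mem_singleton_iff, Prod.ext_iff] at h
      norm_num at h
    · have : d - ((1, -1) : ℤ × ℤ) + (0, -1) = d - (1, 0) := by
        obtain ⟨d1, d2⟩ := d
        simp only [Prod.mk_sub_mk, Prod.mk_add_mk, Prod.mk.injEq]
        omega
      rw [this]; exact h2
  · -- α = (1,-1), β = (0,1), γ = (1,0) : d - α - β + γ = d
    refine no_pair' n D hn hD (1, 0) (by tauto) ?_ k (d - (1, -1) - (0, 1)) h3 ?_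
    · rw [hAD]; intro h
      simp only [Set.mem_insert_iff, Set.mem_singleton_iff, Prod.ext_iff] at h
      norm_num at h
    · have : d - ((1, -1) : ℤ × ℤ) - (0, 1) + (1, 0) = d := by
        obtain ⟨d1, d2⟩ := d
        simp only [Prod.mk_sub_mk, Prod.mk_add_mk, Prod.mk.injEq]
        omega
      rw [this]; exact h0
end
end
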